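/- Let A : J → ℝ be C² with A''(x) ≥ 0 for all x ∈ J (or A''(x) ≤ 0 for all x ∈ J). Then for any three distinct points x1, x2, x3 ∈ J, the symmetrized real part S[Re K_Γ](z) = 2·Σ_j (1/(s²(x_j)·ℓ_k²·ℓ_l²)) · [∫_{x_k}^{x_j}(A'(t)−A'(x_j))dt] · [∫_{x_l}^{x_j}(A'(t)−A'(x_j))dt] is nonnegative. -/
import Mathlib


open intervalIntegral

/-- If `A'` has nonnegative derivative `A''` on an order-connected set `J`, then
`A'` is monotone on `J`. -/
lemma stmt12_mono (A' A'' : ℝ → ℝ) (J : Set ℝ) (hJ : J.OrdConnected)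
    (hd2 : ∀ x ∈ J, HasDerivAt A' (A'' x) x)
    (hcont : ContinuousOn A'' J)
    (hsign : ∀ x ∈ J, 0 ≤ A'' x)
    {a b : ℝ} (ha : a ∈ J) (hb : b ∈ J) (hab : a ≤ b) : A' a ≤ A' b := by
  have hsub : Set.Icc a b ⊆ J := hJ.out ha hb
  have key : A' b - A' a = ∫ t in a..b, A'' t := by
    refine (intervalIntegral.integral_eq_sub_of_hasDerivAt (fun t ht => ?_) ?_).symm
    · exact hd2 t (hsub (by rwa [Set.uIcc_of_le hab] at ht))
    · exact (hcont.mono (by rwa [Set.uIcc_of_le hab])).intervalIntegrable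
  have hnn : 0 ≤ ∫ t in a..b, A'' t :=
    intervalIntegral.integral_nonneg hab (fun t ht => hsign t (hsub ht))
  linarith

lemma stmt12_int_nonpos (A' A'' : ℝ → ℝ) (J : Set ℝ) (hJ : J.OrdConnected)
    (hd2 : ∀ x ∈ J, HasDerivAt A' (A'' x) x)
    (hcont : ContinuousOn A'' J)
    (hsign : ∀ x ∈ J, 0 ≤ A'' x)
    {a b : ℝ} (ha : a ∈ J) (hb : b ∈ J) :
    (∫ t in a..b, (A' t - A' b)) ≤ 0 := by
  rcases le_total a b with hab | hba
  · have hnn : 0 ≤ ∫ t in a..b, (A' b - A' t) := by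
      refine intervalIntegral.integral_nonneg hab (fun t ht => ?_)
      have htJ : t ∈ J := hJ.out ha hb ht
      have := stmt12_mono A' A'' J hJ hd2 hcont hsign htJ hb ht.2
      linarith
    have e : (∫ t in a..b, (A' b - A' t)) = -∫ t in a..b, (A' t - A' b) := by
      rw [← intervalIntegral.integral_neg]; congr 1; funext t; ring
    linarith [e ▸ hnn]
  · rw [intervalIntegral.integral_symm]
    have : 0 ≤ ∫ t in b..a, (A' t - A' b) := by
      refine intervalIntegral.integral_nonneg hba (fun t ht => ?_)
      have htJ : t ∈ J := hJ.out hb ha ht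
      have := stmt12_mono A' A'' J hJ hd2 hcont hsign hb htJ ht.1
      linarith
    linarith

/-- Under either convexity assumption, the product of the two integrals is nonnegative. -/
lemma stmt12_prod (A' A'' : ℝ → ℝ) (J : Set ℝ) (hJ : J.OrdConnected)
    (hd2 : ∀ x ∈ J, HasDerivAt A' (A'' x) x)
    (hcont : ContinuousOn A'' J)
    (hsign : (∀ x ∈ J, 0 ≤ A'' x) ∨ (∀ x ∈ J, A'' x ≤ 0))
    {a b c : ℝ} (ha : a ∈ J) (hb : b ∈ J) (hc : c ∈ J) :
    0 ≤ (∫ t in a..b, (A' t - A' b)) * (∫ t in c..b, (A' t - A' b)) := by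
  rcases hsign with hs | hs
  · have k1 := stmt12_int_nonpos A' A'' J hJ hd2 hcont hs ha hb
    have k2 := stmt12_int_nonpos A' A'' J hJ hd2 hcont hs hc hb
    nlinarith [k1, k2]
  · have hd2' : ∀ x ∈ J, HasDerivAt (fun t => -A' t) (-A'' x) x :=
      fun x hx => (hd2 x hx).neg
    have hcont' : ContinuousOn (fun t => -A'' t) J := hcont.neg
    have hs' : ∀ x ∈ J, 0 ≤ -A'' x := fun x hx => neg_nonneg.2 (hs x hx)
    have k1 := stmt12_int_nonpos (fun t => -A' t) (fun t => -A'' t) J hJ hd2' hcont' hs' ha hb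
    have k2 := stmt12_int_nonpos (fun t => -A' t) (fun t => -A'' t) J hJ hd2' hcont' hs' hc hb
    have e1 : (∫ t in a..b, (-A' t - -A' b)) = -∫ t in a..b, (A' t - A' b) := by
      rw [← intervalIntegral.integral_neg]; congr 1; funext t; ring
    have e2 : (∫ t in c..b, (-A' t - -A' b)) = -∫ t in c..b, (A' t - A' b) := by
      rw [← intervalIntegral.integral_neg]; congr 1; funext t; ring
    rw [e1] at k1; rw [e2] at k2
    have h1 : 0 ≤ ∫ t in a..b, (A' t - A' b) := by linarith
    have h2 : 0 ≤ ∫ t in c..b, (A' t - A' b) := by linarith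
    exact mul_nonneg h1 h2

/-- If `A` is `C²` with fixed concavity on `J`, then the symmetrized real part of the
restricted Cauchy kernel on the graph of `A` is nonnegative. -/
theorem stmt12 (A A' A'' : ℝ → ℝ) (J : Set ℝ) (hJ : J.OrdConnected)
    (hd1 : ∀ x ∈ J, HasDerivAt A (A' x) x)
    (hd2 : ∀ x ∈ J, HasDerivAt A' (A'' x) x)
    (hcont : ContinuousOn A'' J)
    (hsign : (∀ x ∈ J, 0 ≤ A'' x) ∨ (∀ x ∈ J, A'' x ≤ 0))
    (x1 x2 x3 : ℝ) (h1 : x1 ∈ J) (h2 : x2 ∈ J) (h3 : x3 ∈ J)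
    (h12 : x1 ≠ x2) (h13 : x1 ≠ x3) (h23 : x2 ≠ x3) :
    0 ≤ 2 * ((1 / ((1 + (A' x1) ^ 2) * ((x3 - x1) ^ 2 + (A x3 - A x1) ^ 2) *
            ((x2 - x1) ^ 2 + (A x2 - A x1) ^ 2))) *
          (∫ t in x2..x1, (A' t - A' x1)) * (∫ t in x3..x1, (A' t - A' x1)) +
        (1 / ((1 + (A' x2) ^ 2) * ((x3 - x2) ^ 2 + (A x3 - A x2) ^ 2) *
            ((x2 - x1) ^ 2 + (A x2 - A x1) ^ 2))) *
          (∫ t in x1..x2, (A' t - A' x2)) * (∫ t in x3..x2, (A' t - A' x2)) +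
        (1 / ((1 + (A' x3) ^ 2) * ((x3 - x2) ^ 2 + (A x3 - A x2) ^ 2) *
            ((x3 - x1) ^ 2 + (A x3 - A x1) ^ 2))) *
          (∫ t in x1..x3, (A' t - A' x3)) * (∫ t in x2..x3, (A' t - A' x3))) := by
  have p1 := stmt12_prod A' A'' J hJ hd2 hcont hsign h2 h1 h3
  have p2 := stmt12_prod A' A'' J hJ hd2 hcont hsign h1 h2 h3
  have p3 := stmt12_prod A' A'' J hJ hd2 hcont hsign h1 h3 h2
  have c1 : 0 ≤ 1 / ((1 + (A' x1) ^ 2) * ((x3 - x1) ^ 2 + (A x3 - A x1) ^ 2) *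
      ((x2 - x1) ^ 2 + (A x2 - A x1) ^ 2)) := by positivity
  have c2 : 0 ≤ 1 / ((1 + (A' x2) ^ 2) * ((x3 - x2) ^ 2 + (A x3 - A x2) ^ 2) *
      ((x2 - x1) ^ 2 + (A x2 - A x1) ^ 2)) := by positivity
  have c3 : 0 ≤ 1 / ((1 + (A' x3) ^ 2) * ((x3 - x2) ^ 2 + (A x3 - A x2) ^ 2) *
      ((x3 - x1) ^ 2 + (A x3 - A x1) ^ 2)) := by positivity
  have t1 := mul_nonneg c1 p1
  have t2 := mul_nonneg c2 p2
  have t3 := mul_nonneg c3 p3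
  nlinarith [t1, t2, t3]
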